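/- Let G be a homogeneous caching instance (all content sizes equal 1) and let G' be obtained from G by, for every maximal set of caches with identical neighborhoods, replacing them by a single cache with the same neighborhood whose capacity is the sum of their capacities. Then for every target ℓ, G admits a feasible caching allocation with cache hit rate at least ℓ if and only if G' does. Moreover, if G has U users, then G' has at most 2^U caches. -/

import Mathlib

attribute [local instance] Classical.propDecidable

noncomputable section

variable {C U S : Type*} [Fintype C] [Fintype U] [Fintype S]

/-- The set of contents stored (under allocation `Z`) in some cache adjacent to user `u`. -/
def Hset (adj : U → C → Prop) (Z : C → Finset S) (u : U) : Finset S :=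
  Finset.univ.filter (fun s => ∃ c, adj u c ∧ s ∈ Z c)

/-- The cache hit rate of allocation `Z`. -/
def CH (adj : U → C → Prop) (w : U → ℚ) (p : U → S → ℚ) (Z : C → Finset S) : ℚ :=
  ∑ u, ∑ s ∈ Hset adj Z u, w u * p u s

/-- Any finset whose cardinality is at most the total capacity of a finite set of caches
can be split among those caches respecting capacities. -/
lemma split_lemma {C S : Type*} [DecidableEq C] [DecidableEq S] (κ : C → ℕ) :
    ∀ (F : Finset C) (T : Finset S), T.card ≤ ∑ c ∈ F, κ c →
      ∃ Z : C → Finset S, (∀ c, (Z c).card ≤ κ c) ∧ (∀ c, Z c ⊆ T) ∧ F.biUnion Z = T := by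
  intro F
  induction F using Finset.induction_on with
  | empty =>
      intro T hT
      simp only [Finset.sum_empty, Nat.le_zero, Finset.card_eq_zero] at hT
      exact ⟨fun _ => ∅, fun c => by simp, fun c => by simp, by simp [hT]⟩
  | @insert a F ha ih =>
      intro T hT
      rw [Finset.sum_insert ha] at hT
      obtain ⟨T₁, hT₁sub, hT₁card⟩ := T.exists_subset_card_eq (min_le_right (κ a) T.card)
      have hdiff : (T \ T₁).card ≤ ∑ c ∈ F, κ c := by
        rw [Finset.card_sdiff_of_subset hT₁sub, hT₁card]
        omega
      obtain ⟨Z, hZcard, hZsub, hZunion⟩ := ih (T \ T₁) hdiff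
      refine ⟨Function.update Z a T₁, ?_, ?_, ?_⟩
      · intro c
        by_cases hc : c = a
        · subst hc; rw [Function.update_self, hT₁card]; exact min_le_left _ _
        · rw [Function.update_of_ne hc]; exact hZcard c
      · intro c
        by_cases hc : c = a
        · subst hc; rw [Function.update_self]; exact hT₁sub
        · rw [Function.update_of_ne hc]
          exact (hZsub c).trans (Finset.sdiff_subset)
      · rw [Finset.biUnion_insert, Function.update_self]
        have : F.biUnion (Function.update Z a T₁) = F.biUnion Z := by
          apply Finset.biUnion_congr rfl
          intro c hc
          have : c ≠ a := by rintro rfl; exact ha hc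
          rw [Function.update_of_ne this]
        rw [this, hZunion, Finset.union_sdiff_of_subset hT₁sub]

/-- Homogeneous instance: merging all caches with identical neighborhoods into a single
cache (indexed by the common neighborhood, a `Finset U`) with summed capacity preserves
achievable cache hit rates; the merged instance has at most `2 ^ U` caches. -/
theorem merge_caches_hom
    (adj : U → C → Prop) (κ : C → ℕ) (p : U → S → ℚ) (w : U → ℚ) (ℓ : ℚ) :
    ((∃ Z : C → Finset S, (∀ c, (Z c).card ≤ κ c) ∧ ℓ ≤ CH adj w p Z) ↔
     (∃ Z' : Finset U → Finset S,
        (∀ N : Finset U, (Z' N).card ≤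
          ∑ c ∈ Finset.univ.filter
              (fun c : C => Finset.univ.filter (fun u : U => adj u c) = N), κ c) ∧
        ℓ ≤ CH (fun (u : U) (N : Finset U) => u ∈ N) w p Z'))
    ∧ Fintype.card (Finset U) ≤ 2 ^ Fintype.card U := by
  classical
  set nbhd : C → Finset U := fun c => Finset.univ.filter (fun u : U => adj u c) with hnbhd
  have hmem : ∀ u c, adj u c ↔ u ∈ nbhd c := by
    intro u c; simp [hnbhd]
  constructor
  · constructor
    · -- forward direction
      rintro ⟨Z, hZcard, hZCH⟩
      refine ⟨fun N => (Finset.univ.filter (fun c : C => nbhd c = N)).biUnion Z, ?_, ?_⟩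
      · intro N
        calc ((Finset.univ.filter (fun c : C => nbhd c = N)).biUnion Z).card
            ≤ ∑ c ∈ Finset.univ.filter (fun c : C => nbhd c = N), (Z c).card :=
              Finset.card_biUnion_le
          _ ≤ _ := Finset.sum_le_sum (fun c _ => hZcard c)
      · have : CH (fun (u : U) (N : Finset U) => u ∈ N) w p
            (fun N => (Finset.univ.filter (fun c : C => nbhd c = N)).biUnion Z)
            = CH adj w p Z := by
          unfold CH
          apply Finset.sum_congr rfl
          intro u _
          apply Finset.sum_congr _ (fun _ _ => rfl)
          ext s
          simp only [Hset, Finset.mem_filter, Finset.mem_univ, true_and,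
            Finset.mem_biUnion]
          constructor
          · rintro ⟨N, huN, c, hc, hs⟩
            have hc' : nbhd c = N := by simpa using hc
            exact ⟨c, (hmem u c).2 (hc' ▸ huN), hs⟩
          · rintro ⟨c, hadj, hs⟩
            exact ⟨nbhd c, (hmem u c).1 hadj, c, by simp, hs⟩
        rw [this]; exact hZCH
    · -- backward direction
      rintro ⟨Z', hZ'card, hZ'CH⟩
      set F : Finset U → Finset C := fun N => Finset.univ.filter (fun c : C => nbhd c = N)
        with hF
      have hsplit : ∀ N, ∃ Z : C → Finset S, (∀ c, (Z c).card ≤ κ c) ∧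
          (∀ c, Z c ⊆ Z' N) ∧ (F N).biUnion Z = Z' N := by
        intro N
        exact split_lemma κ (F N) (Z' N) (hZ'card N)
      choose ZN hZNcard hZNsub hZNunion using hsplit
      refine ⟨fun c => ZN (nbhd c) c, fun c => hZNcard _ c, ?_⟩
      have : CH adj w p (fun c => ZN (nbhd c) c)
          = CH (fun (u : U) (N : Finset U) => u ∈ N) w p Z' := by
        unfold CH
        apply Finset.sum_congr rfl
        intro u _
        apply Finset.sum_congr _ (fun _ _ => rfl)
        ext s
        simp only [Hset, Finset.mem_filter, Finset.mem_univ, true_and]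
        constructor
        · rintro ⟨c, hadj, hs⟩
          refine ⟨nbhd c, (hmem u c).1 hadj, ?_⟩
          exact hZNsub (nbhd c) c hs
        · rintro ⟨N, huN, hs⟩
          rw [← hZNunion N, Finset.mem_biUnion] at hs
          obtain ⟨c, hcF, hs⟩ := hs
          have hceq : nbhd c = N := by
            have := hcF
            rw [hF] at this
            exact (Finset.mem_filter.mp this).2
          refine ⟨c, (hmem u c).2 (hceq ▸ huN), ?_⟩
          rw [hceq]; exact hs
      rw [this]; exact hZ'CH
  · rw [Fintype.card_finset]
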